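/- arXiv:1604.03714 — 5 statements merged into one kernel-verified Lean document; each statement's English description precedes it below -/
import Mathlib

section
/- Let α_i, β_i ∈ ℝ³ be linearly independent, let k_α, k_β, l_α, l_β > 0, and let Ω : ℝ → ℝ³ be continuous with ‖Ω(t)‖ ≤ c_ω for all t and some c_ω ≥ 0. Then every solution E = (E_α, E_β, E_b) : [t₀, ∞) → ℝ³ × ℝ³ × ℝ³ of the error system Ė_α = E_b × (α_i + E_α) − k_α E_α, Ė_β = E_b × (β_i + E_β) − k_β E_β, Ė_b = Ω × E_b + l_α E_α × α_i + l_β E_β × β_i converges to (0,0,0) as t → ∞. -/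
open scoped RealInnerProductSpace
open Matrix Filter

noncomputable section

/-- ℝ³ with the Euclidean norm and inner product. -/
abbrev V3 : Type := EuclideanSpace ℝ (Fin 3)

/-- Identity identification of `V3` with plain functions `Fin 3 → ℝ`. -/
def toF (v : V3) : Fin 3 → ℝ := v

/-- Identity identification of plain functions `Fin 3 → ℝ` with `V3`. -/
def toE (v : Fin 3 → ℝ) : V3 := WithLp.toLp 2 v

/-- The cross product on ℝ³. -/
def cross (v w : V3) : V3 := toE (crossProduct (toF v) (toF w))

/-- `(Eα, Eβ, Eb)` is a solution on `[t₀, ∞)` of the error system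
`Ėα = Eb × (αi + Eα) − kα Eα`, `Ėβ = Eb × (βi + Eβ) − kβ Eβ`,
`Ėb = Ω × Eb + lα Eα × αi + lβ Eβ × βi`. -/
def IsSolution (αi βi : V3) (kα kβ lα lβ : ℝ) (Ω : ℝ → V3) (t₀ : ℝ)
    (Eα Eβ Eb : ℝ → V3) : Prop :=
  ∀ t ∈ Set.Ici t₀,
    HasDerivWithinAt Eα (cross (Eb t) (αi + Eα t) - kα • Eα t) (Set.Ici t₀) t ∧
    HasDerivWithinAt Eβ (cross (Eb t) (βi + Eβ t) - kβ • Eβ t) (Set.Ici t₀) t ∧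
    HasDerivWithinAt Eb
      (cross (Ω t) (Eb t) + lα • cross (Eα t) αi + lβ • cross (Eβ t) βi) (Set.Ici t₀) t

/-- The Euclidean norm of a state `(Eα, Eβ, Eb) ∈ ℝ³ × ℝ³ × ℝ³`. -/
def stateNorm (Eα Eβ Eb : V3) : ℝ := Real.sqrt (‖Eα‖ ^ 2 + ‖Eβ‖ ^ 2 + ‖Eb‖ ^ 2)


set_option linter.unusedTactic false
set_option linter.unreachableTactic false

section Aux

lemma inner_cross_swap (a b c : V3) : ⟪a, cross b c⟫ = -⟪b, cross a c⟫ := by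
  simp [cross, toE, toF, crossProduct, PiLp.inner_apply, RCLike.inner_apply, Fin.sum_univ_three]
  ring

lemma inner_cross_self (a b : V3) : ⟪a, cross b a⟫ = 0 := by
  simp [cross, toE, toF, crossProduct, PiLp.inner_apply, RCLike.inner_apply, Fin.sum_univ_three]
  ring

lemma cross_sub_left (a b c : V3) : cross (a - b) c = cross a c - cross b c := by
  simp only [cross, toE, toF, crossProduct]
  ext i; fin_cases i <;> simp <;> ring

lemma cross_add_left (a b c : V3) : cross (a + b) c = cross a c + cross b c := by
  simp only [cross, toE, toF, crossProduct]
  ext i; fin_cases i <;> simp <;> ring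

lemma cross_smul_left (r : ℝ) (a c : V3) : cross (r • a) c = r • cross a c := by
  simp only [cross, toE, toF, crossProduct]
  ext i; fin_cases i <;> simp <;> ring

lemma cross_sub_right (a b c : V3) : cross a (b - c) = cross a b - cross a c := by
  simp only [cross, toE, toF, crossProduct]
  ext i; fin_cases i <;> simp <;> ring

lemma cross_add_right (a b c : V3) : cross a (b + c) = cross a b + cross a c := by
  simp only [cross, toE, toF, crossProduct]
  ext i; fin_cases i <;> simp <;> ring

lemma norm_cross_le (a b : V3) : ‖cross a b‖ ≤ ‖a‖ * ‖b‖ := by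
  have h1 : ‖cross a b‖ ^ 2 ≤ (‖a‖ * ‖b‖) ^ 2 := by
    have e1 : ‖cross a b‖ ^ 2 = ⟪cross a b, cross a b⟫ := (real_inner_self_eq_norm_sq _).symm
    have e2 : ‖a‖ ^ 2 = ⟪a, a⟫ := (real_inner_self_eq_norm_sq _).symm
    have e3 : ‖b‖ ^ 2 = ⟪b, b⟫ := (real_inner_self_eq_norm_sq _).symm
    rw [mul_pow, e1, e2, e3]
    have h : ⟪cross a b, cross a b⟫ = ⟪a,a⟫*⟪b,b⟫ - ⟪a,b⟫^2 := by
      simp [cross, toE, toF, crossProduct, PiLp.inner_apply, RCLike.inner_apply,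
        Fin.sum_univ_three, -inner_self_eq_norm_sq_to_K]
      ring
    rw [h]
    nlinarith [sq_nonneg (⟪a,b⟫ : ℝ)]
  nlinarith [norm_nonneg (cross a b), mul_nonneg (norm_nonneg a) (norm_nonneg b)]

lemma cross_eq_zero_imp {v w : V3} (hv : v ≠ 0) (h : cross v w = 0) : ∃ a : ℝ, a • v = w := by
  have h' : crossProduct (toF v) (toF w) = 0 := by
    simpa [cross, toE] using congrArg WithLp.ofLp h
  have hv' : toF v ≠ 0 := fun h0 => hv (by simpa [toF] using congrArg (WithLp.toLp 2) h0)
  have hni : ¬ LinearIndependent ℝ ![toF v, toF w] := by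
    intro hli
    exact (crossProduct_ne_zero_iff_linearIndependent.2 hli) h'
  rw [LinearIndependent.pair_iff' hv'] at hni
  push_neg at hni
  obtain ⟨a, ha⟩ := hni
  exact ⟨a, WithLp.ofLp_injective 2 (by simpa [toF] using ha)⟩

lemma hasDerivWithinAt_norm_sq {f : ℝ → V3} {f' : V3} {s : Set ℝ} {t : ℝ}
    (hf : HasDerivWithinAt f f' s t) :
    HasDerivWithinAt (fun u => ‖f u‖ ^ 2) (2 * ⟪f t, f'⟫) s t := by
  have h := hf.inner ℝ hf
  have he : (⟪f t, f'⟫ + ⟪f', f t⟫ : ℝ) = 2 * ⟪f t, f'⟫ := by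
    rw [real_inner_comm (f') (f t)]; ring
  rw [he] at h
  exact h.congr (fun u _ => (real_inner_self_eq_norm_sq _).symm)
    (real_inner_self_eq_norm_sq _).symm

lemma abs_norm_sq_sub_le {x y : V3} {B : ℝ} (hx : ‖x‖ ≤ B) (hy : ‖y‖ ≤ B) :
    |‖x‖ ^ 2 - ‖y‖ ^ 2| ≤ 2 * B * ‖x - y‖ := by
  have h2 : |‖x‖ - ‖y‖| ≤ ‖x - y‖ := abs_norm_sub_norm_le x y
  rw [abs_le] at h2 ⊢
  constructor <;> nlinarith [norm_nonneg x, norm_nonneg y, norm_nonneg (x - y)]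

lemma barbalat {F : Type*} [NormedAddCommGroup F] [InnerProductSpace ℝ F]
    {f f' : ℝ → F} {t₀ L : ℝ} {l : F}
    (hd : ∀ t ∈ Set.Ici t₀, HasDerivWithinAt f (f' t) (Set.Ici t₀) t)
    (hlip : ∀ s ∈ Set.Ici t₀, ∀ u ∈ Set.Ici t₀, ‖f' s - f' u‖ ≤ L * |s - u|)
    (hconv : Tendsto f atTop (nhds l)) :
    Tendsto f' atTop (nhds 0) := by
  have hL0 : 0 ≤ L := by
    have h1 := hlip (t₀ + 1) (by simp) t₀ (le_refl t₀)
    have h2 : |t₀ + 1 - t₀| = 1 := by simp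
    rw [h2, mul_one] at h1
    exact le_trans (norm_nonneg _) h1
  rw [Metric.tendsto_atTop]
  intro ε hε
  set L' : ℝ := L + 1 with hL'def
  have hL'0 : 0 < L' := by linarith
  set δ : ℝ := ε / (2 * L') with hδdef
  have hδ0 : 0 < δ := by positivity
  have hL'δ : L' * δ = ε / 2 := by rw [hδdef]; field_simp
  obtain ⟨T₁, hT₁⟩ := Metric.tendsto_atTop.1 hconv (ε * δ / 8) (by positivity)
  refine ⟨max T₁ t₀, fun t ht => ?_⟩
  have htt₀ : t₀ ≤ t := le_trans (le_max_right _ _) ht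
  have htT₁ : T₁ ≤ t := le_trans (le_max_left _ _) ht
  rw [dist_zero_right]
  by_contra hcon
  push_neg at hcon
  have hnft : 0 < ‖f' t‖ := lt_of_lt_of_le hε hcon
  set u : F := ‖f' t‖⁻¹ • f' t with hu
  have hnu : ‖u‖ = 1 := by
    rw [hu, norm_smul, Real.norm_eq_abs, abs_of_pos (inv_pos.2 hnft),
      inv_mul_cancel₀ hnft.ne']
  have hinner_t : ⟪f' t, u⟫ = ‖f' t‖ := by
    rw [hu, real_inner_smul_right, real_inner_self_eq_norm_sq]
    field_simp
  have hlow : ∀ s ∈ Set.Icc t (t + δ), ε / 2 ≤ ⟪f' s, u⟫ := by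
    intro s hs
    have hs0 : t₀ ≤ s := le_trans htt₀ hs.1
    have hst : ‖f' s - f' t‖ ≤ L * δ := by
      have h1 := hlip s hs0 t htt₀
      have h2 : |s - t| ≤ δ := by
        rw [abs_of_nonneg (by linarith [hs.1])]
        linarith [hs.2]
      calc ‖f' s - f' t‖ ≤ L * |s - t| := h1
        _ ≤ L * δ := by nlinarith
    have habs : |⟪f' s - f' t, u⟫| ≤ ‖f' s - f' t‖ := by
      calc |⟪f' s - f' t, u⟫| ≤ ‖f' s - f' t‖ * ‖u‖ := abs_real_inner_le_norm _ _
        _ = ‖f' s - f' t‖ := by rw [hnu, mul_one]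
    have hsub : ⟪f' s - f' t, u⟫ = ⟪f' s, u⟫ - ⟪f' t, u⟫ := inner_sub_left _ _ _
    have hLδ : L * δ ≤ ε / 2 := by
      rw [← hL'δ]; nlinarith
    have := abs_le.1 habs
    nlinarith [hcon]
  have hmem1 : t ∈ Set.Icc t (t + δ) := ⟨le_refl t, by linarith⟩
  have hmem2 : t + δ ∈ Set.Icc t (t + δ) := ⟨by linarith, le_refl _⟩
  have hIcc_sub : Set.Icc t (t + δ) ⊆ Set.Ici t₀ := fun y hy => le_trans htt₀ hy.1
  have hg : ∀ x ∈ Set.Ici t₀,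
      HasDerivWithinAt (fun s => ⟪f s, u⟫ - ε / 2 * s) (⟪f' x, u⟫ - ε / 2) (Set.Ici t₀) x := by
    intro x hx
    have h1 : HasDerivWithinAt (fun s => ⟪f s, u⟫) (⟪f x, (0:F)⟫ + ⟪f' x, u⟫)
        (Set.Ici t₀) x := (hd x hx).inner ℝ (hasDerivWithinAt_const _ _ u)
    have h1' : HasDerivWithinAt (fun s => ⟪f s, u⟫) (⟪f' x, u⟫) (Set.Ici t₀) x := by
      simpa using h1
    have h2 : HasDerivWithinAt (fun s : ℝ => ε / 2 * s) (ε / 2) (Set.Ici t₀) x := by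
      simpa using (hasDerivWithinAt_id x (Set.Ici t₀)).const_mul (ε / 2)
    exact h1'.sub h2
  have hmono := monotoneOn_of_hasDerivWithinAt_nonneg (convex_Icc t (t + δ))
    (f := fun s => ⟪f s, u⟫ - ε / 2 * s) (f' := fun s => ⟪f' s, u⟫ - ε / 2)
    (fun x hx => ((hg x (hIcc_sub hx)).mono hIcc_sub).continuousWithinAt)
    (fun x hx => by
      rw [interior_Icc] at hx
      exact (hg x (le_trans htt₀ hx.1.le)).mono
        (by rw [interior_Icc]; exact fun y hy => le_trans htt₀ hy.1.le))
    (fun x hx => by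
      rw [interior_Icc] at hx
      have := hlow x ⟨hx.1.le, hx.2.le⟩
      linarith)
  have hkey := hmono hmem1 hmem2 (by linarith)
  simp only at hkey
  have hgain : ε / 2 * δ ≤ ⟪f (t + δ) - f t, u⟫ := by
    have : ⟪f (t + δ) - f t, u⟫ = ⟪f (t + δ), u⟫ - ⟪f t, u⟫ := inner_sub_left _ _ _
    nlinarith [hkey]
  have hupper : ⟪f (t + δ) - f t, u⟫ ≤ ‖f (t + δ) - f t‖ := by
    calc ⟪f (t + δ) - f t, u⟫ ≤ ‖f (t + δ) - f t‖ * ‖u‖ := real_inner_le_norm _ _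
      _ = ‖f (t + δ) - f t‖ := by rw [hnu, mul_one]
  have hclose : ‖f (t + δ) - f t‖ < ε * δ / 4 := by
    have h1 := hT₁ (t + δ) (by linarith)
    have h2 := hT₁ t htT₁
    have he : f (t + δ) - f t = (f (t + δ) - l) - (f t - l) := by abel
    rw [he]
    calc ‖(f (t + δ) - l) - (f t - l)‖ ≤ ‖f (t + δ) - l‖ + ‖f t - l‖ := norm_sub_le _ _
      _ = dist (f (t + δ)) l + dist (f t) l := by rw [dist_eq_norm, dist_eq_norm]
      _ < ε * δ / 8 + ε * δ / 8 := by linarith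
      _ = ε * δ / 4 := by ring
  nlinarith [hgain, hupper, hclose]

end Aux

set_option maxHeartbeats 2000000 in
/-- The origin of the error system is globally attractive: every solution
converges to `(0, 0, 0)` as `t → ∞`. -/
theorem error_system_global_convergence
    (αi βi : V3) (hind : LinearIndependent ℝ ![αi, βi])
    (kα kβ lα lβ : ℝ) (hkα : 0 < kα) (hkβ : 0 < kβ) (hlα : 0 < lα) (hlβ : 0 < lβ)
    (cω : ℝ) (hcω : 0 ≤ cω)
    (Ω : ℝ → V3) (hΩcont : Continuous Ω) (hΩbdd : ∀ t, ‖Ω t‖ ≤ cω)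
    (t₀ : ℝ) (Eα Eβ Eb : ℝ → V3)
    (hsol : IsSolution αi βi kα kβ lα lβ Ω t₀ Eα Eβ Eb) :
    Tendsto (fun t => (Eα t, Eβ t, Eb t)) atTop
      (nhds ((0 : V3), (0 : V3), (0 : V3))) := by
  classical
  have hdα : ∀ t ∈ Set.Ici t₀,
      HasDerivWithinAt Eα (cross (Eb t) (αi + Eα t) - kα • Eα t) (Set.Ici t₀) t :=
    fun t ht => (hsol t ht).1
  have hdβ : ∀ t ∈ Set.Ici t₀,
      HasDerivWithinAt Eβ (cross (Eb t) (βi + Eβ t) - kβ • Eβ t) (Set.Ici t₀) t :=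
    fun t ht => (hsol t ht).2.1
  have hdb : ∀ t ∈ Set.Ici t₀,
      HasDerivWithinAt Eb
        (cross (Ω t) (Eb t) + lα • cross (Eα t) αi + lβ • cross (Eβ t) βi) (Set.Ici t₀) t :=
    fun t ht => (hsol t ht).2.2
  set V : ℝ → ℝ := fun t => lα * ‖Eα t‖ ^ 2 + lβ * ‖Eβ t‖ ^ 2 + ‖Eb t‖ ^ 2 with hVdef
  set W : ℝ → ℝ := fun t => -(2 * lα * kα) * ‖Eα t‖ ^ 2 - 2 * lβ * kβ * ‖Eβ t‖ ^ 2 with hWdef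
  -- derivative of the Lyapunov function
  have hVd : ∀ t ∈ Set.Ici t₀, HasDerivWithinAt V (W t) (Set.Ici t₀) t := by
    intro t ht
    have h1 := hasDerivWithinAt_norm_sq (hdα t ht)
    have h2 := hasDerivWithinAt_norm_sq (hdβ t ht)
    have h3 := hasDerivWithinAt_norm_sq (hdb t ht)
    have h := ((h1.const_mul lα).add (h2.const_mul lβ)).add h3
    rw [hVdef]
    refine HasDerivWithinAt.congr_deriv h ?_
    have eα : ⟪Eα t, cross (Eb t) (αi + Eα t) - kα • Eα t⟫
        = -⟪Eb t, cross (Eα t) αi⟫ - kα * ‖Eα t‖ ^ 2 := by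
      rw [inner_sub_right, cross_add_right, inner_add_right, inner_cross_self,
        real_inner_smul_right, real_inner_self_eq_norm_sq, inner_cross_swap]
      ring
    have eβ : ⟪Eβ t, cross (Eb t) (βi + Eβ t) - kβ • Eβ t⟫
        = -⟪Eb t, cross (Eβ t) βi⟫ - kβ * ‖Eβ t‖ ^ 2 := by
      rw [inner_sub_right, cross_add_right, inner_add_right, inner_cross_self,
        real_inner_smul_right, real_inner_self_eq_norm_sq, inner_cross_swap]
      ring
    have eb : ⟪Eb t, cross (Ω t) (Eb t) + lα • cross (Eα t) αi + lβ • cross (Eβ t) βi⟫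
        = lα * ⟪Eb t, cross (Eα t) αi⟫ + lβ * ⟪Eb t, cross (Eβ t) βi⟫ := by
      rw [inner_add_right, inner_add_right, inner_cross_self,
        real_inner_smul_right, real_inner_smul_right]
      ring
    rw [hWdef]
    simp only [eα, eβ, eb]
    ring
  -- V is antitone on [t₀, ∞)
  have hVanti : AntitoneOn V (Set.Ici t₀) := by
    apply antitoneOn_of_hasDerivWithinAt_nonpos (convex_Ici t₀)
      (f' := W)
      (fun x hx => (hVd x hx).continuousWithinAt)
    · intro x hx
      rw [interior_Ici] at hx
      exact (hVd x (Set.mem_Ici.2 (Set.mem_Ioi.1 hx).le)).mono (by rw [interior_Ici]; exact Set.Ioi_subset_Ici_self)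
    · intro x _
      simp only [hWdef]
      nlinarith [mul_pos hlα hkα, mul_pos hlβ hkβ, sq_nonneg ‖Eα x‖, sq_nonneg ‖Eβ x‖]
  have hV0 : ∀ t, 0 ≤ V t := by
    intro t
    rw [hVdef]
    have h1 := mul_nonneg hlα.le (sq_nonneg ‖Eα t‖)
    have h2 := mul_nonneg hlβ.le (sq_nonneg ‖Eβ t‖)
    have h3 := sq_nonneg ‖Eb t‖
    simp only
    linarith
  have hVle : ∀ t ∈ Set.Ici t₀, V t ≤ V t₀ :=
    fun t ht => hVanti Set.self_mem_Ici ht ht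
  -- V converges
  have hVmono' : Antitone (fun t => V (max t t₀)) := by
    intro s t hst
    exact hVanti (le_max_right s t₀) (le_max_right t t₀) (max_le_max hst le_rfl)
  have hbdd : BddBelow (Set.range fun t => V (max t t₀)) := by
    refine ⟨0, ?_⟩
    rintro x ⟨t, rfl⟩
    exact hV0 _
  have hVtend : Tendsto V atTop (nhds (⨅ t, V (max t t₀))) := by
    have h := tendsto_atTop_ciInf hVmono' hbdd
    exact h.congr' ((eventually_ge_atTop t₀).mono fun t ht => by rw [max_eq_left ht])
  -- uniform bounds on the states
  have hM0 : 0 ≤ V t₀ := hV0 t₀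
  have hlm0 : 0 < min lα (min lβ 1) := lt_min hlα (lt_min hlβ one_pos)
  set B : ℝ := Real.sqrt (V t₀ / min lα (min lβ 1)) with hBdef
  have hB0 : 0 ≤ B := Real.sqrt_nonneg _
  have hBsq : B ^ 2 = V t₀ / min lα (min lβ 1) := Real.sq_sqrt (by positivity)
  have hBα : ∀ t ∈ Set.Ici t₀, ‖Eα t‖ ≤ B := by
    intro t ht
    have h1 : lα * ‖Eα t‖ ^ 2 ≤ V t₀ := by
      refine le_trans ?_ (hVle t ht)
      simp only [hVdef]
      nlinarith [sq_nonneg ‖Eb t‖, mul_nonneg hlβ.le (sq_nonneg ‖Eβ t‖)]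
    have h2 : ‖Eα t‖ ^ 2 ≤ B ^ 2 := by
      rw [hBsq, le_div_iff₀ hlm0]
      nlinarith [min_le_left lα (min lβ 1), sq_nonneg ‖Eα t‖]
    nlinarith [norm_nonneg (Eα t)]
  have hBβ : ∀ t ∈ Set.Ici t₀, ‖Eβ t‖ ≤ B := by
    intro t ht
    have h1 : lβ * ‖Eβ t‖ ^ 2 ≤ V t₀ := by
      refine le_trans ?_ (hVle t ht)
      simp only [hVdef]
      nlinarith [sq_nonneg ‖Eb t‖, mul_nonneg hlα.le (sq_nonneg ‖Eα t‖)]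
    have hle : min lα (min lβ 1) ≤ lβ := le_trans (min_le_right _ _) (min_le_left _ _)
    have h2 : ‖Eβ t‖ ^ 2 ≤ B ^ 2 := by
      rw [hBsq, le_div_iff₀ hlm0]
      nlinarith [sq_nonneg ‖Eβ t‖]
    nlinarith [norm_nonneg (Eβ t)]
  have hBb : ∀ t ∈ Set.Ici t₀, ‖Eb t‖ ≤ B := by
    intro t ht
    have h1 : ‖Eb t‖ ^ 2 ≤ V t₀ := by
      refine le_trans ?_ (hVle t ht)
      simp only [hVdef]
      nlinarith [mul_nonneg hlα.le (sq_nonneg ‖Eα t‖), mul_nonneg hlβ.le (sq_nonneg ‖Eβ t‖)]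
    have hle : min lα (min lβ 1) ≤ 1 := le_trans (min_le_right _ _) (min_le_right _ _)
    have h2 : ‖Eb t‖ ^ 2 ≤ B ^ 2 := by
      rw [hBsq, le_div_iff₀ hlm0]
      nlinarith [sq_nonneg ‖Eb t‖]
    nlinarith [norm_nonneg (Eb t)]
  -- bounds on the derivatives
  set Cα : ℝ := B * (‖αi‖ + B) + kα * B with hCαdef
  set Cβ : ℝ := B * (‖βi‖ + B) + kβ * B with hCβdef
  set Cb : ℝ := cω * B + lα * (B * ‖αi‖) + lβ * (B * ‖βi‖) with hCbdef
  have hCα : ∀ t ∈ Set.Ici t₀, ‖cross (Eb t) (αi + Eα t) - kα • Eα t‖ ≤ Cα := by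
    intro t ht
    have h1 : ‖cross (Eb t) (αi + Eα t)‖ ≤ B * (‖αi‖ + B) := by
      have hc := norm_cross_le (Eb t) (αi + Eα t)
      have ha := norm_add_le αi (Eα t)
      have hb := hBα t ht
      have hbb := hBb t ht
      nlinarith [norm_nonneg (Eb t), norm_nonneg (αi + Eα t), norm_nonneg αi]
    have h2 : ‖kα • Eα t‖ ≤ kα * B := by
      rw [norm_smul, Real.norm_eq_abs, abs_of_pos hkα]
      nlinarith [hBα t ht]
    calc ‖cross (Eb t) (αi + Eα t) - kα • Eα t‖
        ≤ ‖cross (Eb t) (αi + Eα t)‖ + ‖kα • Eα t‖ := norm_sub_le _ _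
      _ ≤ Cα := by rw [hCαdef]; linarith
  have hCβ : ∀ t ∈ Set.Ici t₀, ‖cross (Eb t) (βi + Eβ t) - kβ • Eβ t‖ ≤ Cβ := by
    intro t ht
    have h1 : ‖cross (Eb t) (βi + Eβ t)‖ ≤ B * (‖βi‖ + B) := by
      have hc := norm_cross_le (Eb t) (βi + Eβ t)
      have ha := norm_add_le βi (Eβ t)
      have hb := hBβ t ht
      have hbb := hBb t ht
      nlinarith [norm_nonneg (Eb t), norm_nonneg (βi + Eβ t), norm_nonneg βi]
    have h2 : ‖kβ • Eβ t‖ ≤ kβ * B := by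
      rw [norm_smul, Real.norm_eq_abs, abs_of_pos hkβ]
      nlinarith [hBβ t ht]
    calc ‖cross (Eb t) (βi + Eβ t) - kβ • Eβ t‖
        ≤ ‖cross (Eb t) (βi + Eβ t)‖ + ‖kβ • Eβ t‖ := norm_sub_le _ _
      _ ≤ Cβ := by rw [hCβdef]; linarith
  have hCb : ∀ t ∈ Set.Ici t₀,
      ‖cross (Ω t) (Eb t) + lα • cross (Eα t) αi + lβ • cross (Eβ t) βi‖ ≤ Cb := by
    intro t ht
    have h1 : ‖cross (Ω t) (Eb t)‖ ≤ cω * B := by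
      have hc := norm_cross_le (Ω t) (Eb t)
      nlinarith [hΩbdd t, hBb t ht, norm_nonneg (Ω t), norm_nonneg (Eb t)]
    have h2 : ‖lα • cross (Eα t) αi‖ ≤ lα * (B * ‖αi‖) := by
      rw [norm_smul, Real.norm_eq_abs, abs_of_pos hlα]
      have hc := le_trans (norm_cross_le (Eα t) αi)
        (mul_le_mul_of_nonneg_right (hBα t ht) (norm_nonneg αi))
      exact mul_le_mul_of_nonneg_left hc hlα.le
    have h3 : ‖lβ • cross (Eβ t) βi‖ ≤ lβ * (B * ‖βi‖) := by
      rw [norm_smul, Real.norm_eq_abs, abs_of_pos hlβ]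
      have hc := le_trans (norm_cross_le (Eβ t) βi)
        (mul_le_mul_of_nonneg_right (hBβ t ht) (norm_nonneg βi))
      exact mul_le_mul_of_nonneg_left hc hlβ.le
    calc ‖cross (Ω t) (Eb t) + lα • cross (Eα t) αi + lβ • cross (Eβ t) βi‖
        ≤ ‖cross (Ω t) (Eb t) + lα • cross (Eα t) αi‖ + ‖lβ • cross (Eβ t) βi‖ :=
          norm_add_le _ _
      _ ≤ ‖cross (Ω t) (Eb t)‖ + ‖lα • cross (Eα t) αi‖ + ‖lβ • cross (Eβ t) βi‖ := by
          linarith [norm_add_le (cross (Ω t) (Eb t)) (lα • cross (Eα t) αi)]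
      _ ≤ Cb := by rw [hCbdef]; linarith
  have hCα0 : 0 ≤ Cα := le_trans (norm_nonneg _) (hCα t₀ Set.self_mem_Ici)
  have hCβ0 : 0 ≤ Cβ := le_trans (norm_nonneg _) (hCβ t₀ Set.self_mem_Ici)
  have hCb0 : 0 ≤ Cb := le_trans (norm_nonneg _) (hCb t₀ Set.self_mem_Ici)
  -- Lipschitz bounds on the states
  have hLipα : ∀ s ∈ Set.Ici t₀, ∀ u ∈ Set.Ici t₀, ‖Eα s - Eα u‖ ≤ Cα * |s - u| := by
    intro s hs u hu
    have h := Convex.norm_image_sub_le_of_norm_hasDerivWithin_le hdα hCα (convex_Ici t₀) hu hs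
    simpa [Real.norm_eq_abs] using h
  have hLipβ : ∀ s ∈ Set.Ici t₀, ∀ u ∈ Set.Ici t₀, ‖Eβ s - Eβ u‖ ≤ Cβ * |s - u| := by
    intro s hs u hu
    have h := Convex.norm_image_sub_le_of_norm_hasDerivWithin_le hdβ hCβ (convex_Ici t₀) hu hs
    simpa [Real.norm_eq_abs] using h
  have hLipb : ∀ s ∈ Set.Ici t₀, ∀ u ∈ Set.Ici t₀, ‖Eb s - Eb u‖ ≤ Cb * |s - u| := by
    intro s hs u hu
    have h := Convex.norm_image_sub_le_of_norm_hasDerivWithin_le hdb hCb (convex_Ici t₀) hu hs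
    simpa [Real.norm_eq_abs] using h
  -- W is Lipschitz on [t₀, ∞)
  have hLipW : ∀ s ∈ Set.Ici t₀, ∀ u ∈ Set.Ici t₀,
      ‖W s - W u‖ ≤ (2 * lα * kα * (2 * B * Cα) + 2 * lβ * kβ * (2 * B * Cβ)) * |s - u| := by
    intro s hs u hu
    have hα2 := abs_norm_sq_sub_le (hBα s hs) (hBα u hu)
    have hβ2 := abs_norm_sq_sub_le (hBβ s hs) (hBβ u hu)
    have h1 := hLipα s hs u hu
    have h2 := hLipβ s hs u hu
    have m1 : |‖Eα s‖ ^ 2 - ‖Eα u‖ ^ 2| ≤ 2 * B * (Cα * |s - u|) :=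
      le_trans hα2 (by nlinarith)
    have m2 : |‖Eβ s‖ ^ 2 - ‖Eβ u‖ ^ 2| ≤ 2 * B * (Cβ * |s - u|) :=
      le_trans hβ2 (by nlinarith)
    have e : W s - W u = -(2 * lα * kα) * (‖Eα s‖ ^ 2 - ‖Eα u‖ ^ 2)
        - 2 * lβ * kβ * (‖Eβ s‖ ^ 2 - ‖Eβ u‖ ^ 2) := by
      simp only [hWdef]; ring
    rw [Real.norm_eq_abs, e, abs_le]
    have b1 := abs_le.1 m1
    have b2 := abs_le.1 m2
    constructor <;> nlinarith [mul_pos hlα hkα, mul_pos hlβ hkβ]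
  -- first Barbalat application : W → 0
  have hW0 : Tendsto W atTop (nhds 0) := barbalat hVd hLipW hVtend
  -- Eα, Eβ → 0
  have hEαsq : Tendsto (fun t => ‖Eα t‖ ^ 2) atTop (nhds 0) := by
    have h1 : Tendsto (fun t => -W t) atTop (nhds 0) := by simpa using hW0.neg
    have h3 : Tendsto (fun t => 2 * lα * kα * ‖Eα t‖ ^ 2) atTop (nhds 0) := by
      apply squeeze_zero (g := fun t => -W t)
      · intro t; nlinarith [mul_pos hlα hkα, sq_nonneg ‖Eα t‖]
      · intro t; simp only [hWdef]
        nlinarith [mul_pos hlβ hkβ, sq_nonneg ‖Eβ t‖]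
      · exact h1
    have hc : (2 * lα * kα) ≠ 0 := by positivity
    have h4 := h3.const_mul ((2 * lα * kα)⁻¹)
    simp only [mul_zero] at h4
    exact h4.congr fun t => inv_mul_cancel_left₀ hc _
  have hEβsq : Tendsto (fun t => ‖Eβ t‖ ^ 2) atTop (nhds 0) := by
    have h1 : Tendsto (fun t => -W t) atTop (nhds 0) := by simpa using hW0.neg
    have h3 : Tendsto (fun t => 2 * lβ * kβ * ‖Eβ t‖ ^ 2) atTop (nhds 0) := by
      apply squeeze_zero (g := fun t => -W t)
      · intro t; nlinarith [mul_pos hlβ hkβ, sq_nonneg ‖Eβ t‖]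
      · intro t; simp only [hWdef]
        nlinarith [mul_pos hlα hkα, sq_nonneg ‖Eα t‖]
      · exact h1
    have hc : (2 * lβ * kβ) ≠ 0 := by positivity
    have h4 := h3.const_mul ((2 * lβ * kβ)⁻¹)
    simp only [mul_zero] at h4
    exact h4.congr fun t => inv_mul_cancel_left₀ hc _
  have hEα0 : Tendsto Eα atTop (nhds 0) := by
    rw [tendsto_zero_iff_norm_tendsto_zero]
    have h5 : Tendsto (fun t => Real.sqrt (‖Eα t‖ ^ 2)) atTop (nhds (Real.sqrt 0)) :=
      (Real.continuous_sqrt.tendsto 0).comp hEαsq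
    rw [Real.sqrt_zero] at h5
    exact h5.congr fun t => Real.sqrt_sq (norm_nonneg _)
  have hEβ0 : Tendsto Eβ atTop (nhds 0) := by
    rw [tendsto_zero_iff_norm_tendsto_zero]
    have h5 : Tendsto (fun t => Real.sqrt (‖Eβ t‖ ^ 2)) atTop (nhds (Real.sqrt 0)) :=
      (Real.continuous_sqrt.tendsto 0).comp hEβsq
    rw [Real.sqrt_zero] at h5
    exact h5.congr fun t => Real.sqrt_sq (norm_nonneg _)
  -- second Barbalat application : the derivatives of Eα, Eβ tend to 0
  have hLipDα : ∀ s ∈ Set.Ici t₀, ∀ u ∈ Set.Ici t₀,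
      ‖(cross (Eb s) (αi + Eα s) - kα • Eα s) - (cross (Eb u) (αi + Eα u) - kα • Eα u)‖
        ≤ (Cb * (‖αi‖ + B) + B * Cα + kα * Cα) * |s - u| := by
    intro s hs u hu
    have key : (cross (Eb s) (αi + Eα s) - kα • Eα s) - (cross (Eb u) (αi + Eα u) - kα • Eα u)
        = cross (Eb s - Eb u) (αi + Eα s) + cross (Eb u) ((αi + Eα s) - (αi + Eα u))
          - kα • (Eα s - Eα u) := by
      rw [cross_sub_left, cross_sub_right, smul_sub]; abel
    rw [key]
    have n1 : ‖cross (Eb s - Eb u) (αi + Eα s)‖ ≤ Cb * |s - u| * (‖αi‖ + B) := by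
      have hc := norm_cross_le (Eb s - Eb u) (αi + Eα s)
      have h2 := hLipb s hs u hu
      have h3 : ‖αi + Eα s‖ ≤ ‖αi‖ + B := le_trans (norm_add_le _ _) (by linarith [hBα s hs])
      nlinarith [norm_nonneg (Eb s - Eb u), norm_nonneg (αi + Eα s), abs_nonneg (s - u),
        norm_nonneg αi]
    have n2 : ‖cross (Eb u) ((αi + Eα s) - (αi + Eα u))‖ ≤ B * (Cα * |s - u|) := by
      have e2 : (αi + Eα s) - (αi + Eα u) = Eα s - Eα u := by abel
      rw [e2]
      have hc := norm_cross_le (Eb u) (Eα s - Eα u)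
      nlinarith [hLipα s hs u hu, hBb u hu, norm_nonneg (Eα s - Eα u), norm_nonneg (Eb u),
        abs_nonneg (s - u)]
    have n3 : ‖kα • (Eα s - Eα u)‖ ≤ kα * (Cα * |s - u|) := by
      rw [norm_smul, Real.norm_eq_abs, abs_of_pos hkα]
      nlinarith [hLipα s hs u hu, hkα]
    calc ‖cross (Eb s - Eb u) (αi + Eα s) + cross (Eb u) ((αi + Eα s) - (αi + Eα u))
          - kα • (Eα s - Eα u)‖
        ≤ ‖cross (Eb s - Eb u) (αi + Eα s) + cross (Eb u) ((αi + Eα s) - (αi + Eα u))‖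
          + ‖kα • (Eα s - Eα u)‖ := norm_sub_le _ _
      _ ≤ ‖cross (Eb s - Eb u) (αi + Eα s)‖ + ‖cross (Eb u) ((αi + Eα s) - (αi + Eα u))‖
          + ‖kα • (Eα s - Eα u)‖ := by
            linarith [norm_add_le (cross (Eb s - Eb u) (αi + Eα s))
              (cross (Eb u) ((αi + Eα s) - (αi + Eα u)))]
      _ ≤ (Cb * (‖αi‖ + B) + B * Cα + kα * Cα) * |s - u| := by nlinarith [n1, n2, n3]
  have hLipDβ : ∀ s ∈ Set.Ici t₀, ∀ u ∈ Set.Ici t₀,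
      ‖(cross (Eb s) (βi + Eβ s) - kβ • Eβ s) - (cross (Eb u) (βi + Eβ u) - kβ • Eβ u)‖
        ≤ (Cb * (‖βi‖ + B) + B * Cβ + kβ * Cβ) * |s - u| := by
    intro s hs u hu
    have key : (cross (Eb s) (βi + Eβ s) - kβ • Eβ s) - (cross (Eb u) (βi + Eβ u) - kβ • Eβ u)
        = cross (Eb s - Eb u) (βi + Eβ s) + cross (Eb u) ((βi + Eβ s) - (βi + Eβ u))
          - kβ • (Eβ s - Eβ u) := by
      rw [cross_sub_left, cross_sub_right, smul_sub]; abel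
    rw [key]
    have n1 : ‖cross (Eb s - Eb u) (βi + Eβ s)‖ ≤ Cb * |s - u| * (‖βi‖ + B) := by
      have hc := norm_cross_le (Eb s - Eb u) (βi + Eβ s)
      have h2 := hLipb s hs u hu
      have h3 : ‖βi + Eβ s‖ ≤ ‖βi‖ + B := le_trans (norm_add_le _ _) (by linarith [hBβ s hs])
      nlinarith [norm_nonneg (Eb s - Eb u), norm_nonneg (βi + Eβ s), abs_nonneg (s - u),
        norm_nonneg βi]
    have n2 : ‖cross (Eb u) ((βi + Eβ s) - (βi + Eβ u))‖ ≤ B * (Cβ * |s - u|) := by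
      have e2 : (βi + Eβ s) - (βi + Eβ u) = Eβ s - Eβ u := by abel
      rw [e2]
      have hc := norm_cross_le (Eb u) (Eβ s - Eβ u)
      nlinarith [hLipβ s hs u hu, hBb u hu, norm_nonneg (Eβ s - Eβ u), norm_nonneg (Eb u),
        abs_nonneg (s - u)]
    have n3 : ‖kβ • (Eβ s - Eβ u)‖ ≤ kβ * (Cβ * |s - u|) := by
      rw [norm_smul, Real.norm_eq_abs, abs_of_pos hkβ]
      nlinarith [hLipβ s hs u hu, hkβ]
    calc ‖cross (Eb s - Eb u) (βi + Eβ s) + cross (Eb u) ((βi + Eβ s) - (βi + Eβ u))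
          - kβ • (Eβ s - Eβ u)‖
        ≤ ‖cross (Eb s - Eb u) (βi + Eβ s) + cross (Eb u) ((βi + Eβ s) - (βi + Eβ u))‖
          + ‖kβ • (Eβ s - Eβ u)‖ := norm_sub_le _ _
      _ ≤ ‖cross (Eb s - Eb u) (βi + Eβ s)‖ + ‖cross (Eb u) ((βi + Eβ s) - (βi + Eβ u))‖
          + ‖kβ • (Eβ s - Eβ u)‖ := by
            linarith [norm_add_le (cross (Eb s - Eb u) (βi + Eβ s))
              (cross (Eb u) ((βi + Eβ s) - (βi + Eβ u)))]
      _ ≤ (Cb * (‖βi‖ + B) + B * Cβ + kβ * Cβ) * |s - u| := by nlinarith [n1, n2, n3]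
  have hDα0 : Tendsto (fun t => cross (Eb t) (αi + Eα t) - kα • Eα t) atTop (nhds 0) :=
    barbalat hdα hLipDα hEα0
  have hDβ0 : Tendsto (fun t => cross (Eb t) (βi + Eβ t) - kβ • Eβ t) atTop (nhds 0) :=
    barbalat hdβ hLipDβ hEβ0
  -- hence Eb × αi → 0 and Eb × βi → 0
  have hcEbEα : Tendsto (fun t => cross (Eb t) (Eα t)) atTop (nhds 0) := by
    apply squeeze_zero_norm' (a := fun t => B * ‖Eα t‖)
    · filter_upwards [eventually_ge_atTop t₀] with t ht
      exact le_trans (norm_cross_le _ _)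
        (by nlinarith [hBb t ht, norm_nonneg (Eα t), norm_nonneg (Eb t)])
    · have h := (tendsto_zero_iff_norm_tendsto_zero.1 hEα0).const_mul B
      simpa using h
  have hcEbEβ : Tendsto (fun t => cross (Eb t) (Eβ t)) atTop (nhds 0) := by
    apply squeeze_zero_norm' (a := fun t => B * ‖Eβ t‖)
    · filter_upwards [eventually_ge_atTop t₀] with t ht
      exact le_trans (norm_cross_le _ _)
        (by nlinarith [hBb t ht, norm_nonneg (Eβ t), norm_nonneg (Eb t)])
    · have h := (tendsto_zero_iff_norm_tendsto_zero.1 hEβ0).const_mul B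
      simpa using h
  have hcα : Tendsto (fun t => cross (Eb t) αi) atTop (nhds 0) := by
    have h := (hDα0.sub hcEbEα).add (hEα0.const_smul kα)
    have h' : Tendsto (fun t => (cross (Eb t) (αi + Eα t) - kα • Eα t
        - cross (Eb t) (Eα t)) + kα • Eα t) atTop (nhds 0) := by simpa using h
    exact h'.congr fun t => by rw [cross_add_right]; abel
  have hcβ : Tendsto (fun t => cross (Eb t) βi) atTop (nhds 0) := by
    have h := (hDβ0.sub hcEbEβ).add (hEβ0.const_smul kβ)
    have h' : Tendsto (fun t => (cross (Eb t) (βi + Eβ t) - kβ • Eβ t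
        - cross (Eb t) (Eβ t)) + kβ • Eβ t) atTop (nhds 0) := by simpa using h
    exact h'.congr fun t => by rw [cross_add_right]; abel
  -- the linear map v ↦ (v × αi, v × βi) is injective
  let T : V3 →ₗ[ℝ] V3 × V3 :=
    { toFun := fun v => (cross v αi, cross v βi)
      map_add' := fun x y => by
        simp only [cross_add_left, Prod.mk_add_mk]
      map_smul' := fun r x => by
        simp only [cross_smul_left, RingHom.id_apply, Prod.smul_mk]
    }
  have hker : LinearMap.ker T = ⊥ := by
    rw [LinearMap.ker_eq_bot']
    intro v hv
    by_contra hv0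
    have hv' : (cross v αi, cross v βi) = ((0 : V3), (0 : V3)) := hv
    rw [Prod.mk.injEq] at hv'
    obtain ⟨a, ha⟩ := cross_eq_zero_imp hv0 hv'.1
    obtain ⟨b, hb⟩ := cross_eq_zero_imp hv0 hv'.2
    have hα0 : αi ≠ 0 := by
      have := hind.ne_zero 0
      simpa using this
    have ha0 : a ≠ 0 := by
      rintro rfl
      rw [zero_smul] at ha
      exact hα0 ha.symm
    have heq : b • αi + (-a) • βi = 0 := by
      rw [← ha, ← hb, smul_smul, smul_smul, ← add_smul]
      have : b * a + -a * b = 0 := by ring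
      rw [this, zero_smul]
    have hdep := LinearIndependent.pair_iff.1 hind b (-a) heq
    exact ha0 (neg_eq_zero.1 hdep.2)
  obtain ⟨K, hK0, hKanti⟩ := T.exists_antilipschitzWith hker
  have hTtend : Tendsto (fun t => T (Eb t)) atTop (nhds 0) := by
    have h2 : Tendsto (fun t => (cross (Eb t) αi, cross (Eb t) βi)) atTop
        (nhds ((0 : V3), (0 : V3))) := hcα.prodMk_nhds hcβ
    exact h2
  have hEb0 : Tendsto Eb atTop (nhds 0) := by
    rw [tendsto_iff_dist_tendsto_zero]
    apply squeeze_zero (g := fun t => (K : ℝ) * dist (T (Eb t)) 0)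
    · intro t; exact dist_nonneg
    · intro t
      calc dist (Eb t) 0 = dist (Eb t) 0 := rfl
        _ ≤ K * dist (T (Eb t)) (T 0) := by
            have := hKanti.le_mul_dist (Eb t) 0
            simpa using this
        _ = K * dist (T (Eb t)) 0 := by rw [map_zero]
    · have h := (tendsto_iff_dist_tendsto_zero.1 hTtend).const_mul (K : ℝ)
      simpa using h
  exact hEα0.prodMk_nhds (hEβ0.prodMk_nhds hEb0)
end
end

section
/- Let α_i, β_i ∈ ℝ³ be linearly independent, let k_α, k_β, l_α, l_β > 0 and c_ω ≥ 0. Then the origin of the error system is uniformly stable: for every ε > 0 there exists δ > 0 (independent of t₀) such that for every t₀ ∈ ℝ, every continuous Ω : ℝ → ℝ³ with ‖Ω(t)‖ ≤ c_ω for all t, and every solution E of the error system on [t₀, ∞) with ‖E(t₀)‖ ≤ δ, one has ‖E(t)‖ ≤ ε for all t ≥ t₀. -/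
open scoped RealInnerProductSpace
open Matrix Filter

noncomputable section

/-- The key Lyapunov derivative identity. -/
lemma lyap_key (a b c Ω α β : V3) (kα kβ lα lβ : ℝ) :
    lα * (⟪cross c (α + a) - kα • a, a⟫ + ⟪a, cross c (α + a) - kα • a⟫)
      + lβ * (⟪cross c (β + b) - kβ • b, b⟫ + ⟪b, cross c (β + b) - kβ • b⟫)
      + (⟪cross Ω c + lα • cross a α + lβ • cross b β, c⟫
          + ⟪c, cross Ω c + lα • cross a α + lβ • cross b β⟫)
    = -(2 * lα * kα) * ⟪a, a⟫ - (2 * lβ * kβ) * ⟪b, b⟫ := by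
  simp only [cross, toE, toF, PiLp.inner_apply, RCLike.inner_apply, conj_trivial,
    Fin.sum_univ_three, cross_apply, PiLp.sub_apply, PiLp.add_apply, PiLp.smul_apply,
    smul_eq_mul, Matrix.cons_val_zero, Matrix.cons_val_one, Matrix.head_cons,
    Matrix.cons_val_two, Matrix.tail_cons, PiLp.toLp_apply, WithLp.ofLp_toLp]
  ring

/-- The origin of the error system is uniformly stable. -/
theorem error_system_uniform_stability
    (αi βi : V3) (hind : LinearIndependent ℝ ![αi, βi])
    (kα kβ lα lβ : ℝ) (hkα : 0 < kα) (hkβ : 0 < kβ) (hlα : 0 < lα) (hlβ : 0 < lβ)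
    (cω : ℝ) (hcω : 0 ≤ cω) :
    ∀ ε > (0 : ℝ), ∃ δ > (0 : ℝ),
      ∀ (t₀ : ℝ) (Ω : ℝ → V3), Continuous Ω → (∀ t, ‖Ω t‖ ≤ cω) →
        ∀ Eα Eβ Eb : ℝ → V3, IsSolution αi βi kα kβ lα lβ Ω t₀ Eα Eβ Eb →
          stateNorm (Eα t₀) (Eβ t₀) (Eb t₀) ≤ δ →
          ∀ t ≥ t₀, stateNorm (Eα t) (Eβ t) (Eb t) ≤ ε := by
  intro ε hε
  set m : ℝ := min lα (min lβ 1) with hm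
  set M : ℝ := max lα (max lβ 1) with hM
  have hm0 : 0 < m := lt_min hlα (lt_min hlβ one_pos)
  have hM0 : 0 < M := lt_of_lt_of_le one_pos (le_max_of_le_right (le_max_right _ _))
  refine ⟨ε * Real.sqrt (m / M), by positivity, ?_⟩
  intro t₀ Ω hΩc hΩb Eα Eβ Eb hsol h0 t ht
  -- the Lyapunov function
  set V : ℝ → ℝ := fun s => lα * ⟪Eα s, Eα s⟫ + lβ * ⟪Eβ s, Eβ s⟫ + ⟪Eb s, Eb s⟫ with hV
  set W : ℝ → ℝ := fun s => -(2 * lα * kα) * ⟪Eα s, Eα s⟫ - (2 * lβ * kβ) * ⟪Eβ s, Eβ s⟫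
    with hW
  have hVd : ∀ s ∈ Set.Ici t₀, HasDerivWithinAt V (W s) (Set.Ici t₀) s := by
    intro s hs
    obtain ⟨hα, hβ, hb⟩ := hsol s hs
    have h1 := ((hα.inner ℝ hα).const_mul lα).add ((hβ.inner ℝ hβ).const_mul lβ)
    have h2 := h1.add (hb.inner ℝ hb)
    convert h2 using 1
    case e'_4 => rfl
    case e'_5 => rfl
    case e'_8 => rfl
    rw [hW]
    have := lyap_key (Eα s) (Eβ s) (Eb s) (Ω s) αi βi kα kβ lα lβ
    simp only [mul_add] at this ⊢
    linarith [this]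
  have hVcont : ContinuousOn V (Set.Ici t₀) := fun s hs =>
    (hVd s hs).continuousWithinAt
  have hanti : AntitoneOn V (Set.Ici t₀) := by
    apply antitoneOn_of_hasDerivWithinAt_nonpos (convex_Ici t₀) hVcont
    · intro x hx
      rw [interior_Ici] at hx ⊢
      exact (hVd x (Set.Ioi_subset_Ici_self hx)).mono (Set.Ioi_subset_Ici_self)
    · intro x _
      have h1 : (0:ℝ) ≤ ⟪Eα x, Eα x⟫ := real_inner_self_nonneg
      have h2 : (0:ℝ) ≤ ⟪Eβ x, Eβ x⟫ := real_inner_self_nonneg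
      simp only [hW]
      nlinarith [mul_nonneg (by positivity : (0:ℝ) ≤ 2 * lα * kα) h1,
        mul_nonneg (by positivity : (0:ℝ) ≤ 2 * lβ * kβ) h2]
  have hVle : V t ≤ V t₀ := hanti (Set.self_mem_Ici) ht ht
  -- comparison with the state norm squared
  have hnorm : ∀ s, ⟪Eα s, Eα s⟫ = ‖Eα s‖ ^ 2 ∧ ⟪Eβ s, Eβ s⟫ = ‖Eβ s‖ ^ 2 ∧
      ⟪Eb s, Eb s⟫ = ‖Eb s‖ ^ 2 := fun s =>
    ⟨real_inner_self_eq_norm_sq _, real_inner_self_eq_norm_sq _, real_inner_self_eq_norm_sq _⟩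
  set S : ℝ → ℝ := fun s => ‖Eα s‖ ^ 2 + ‖Eβ s‖ ^ 2 + ‖Eb s‖ ^ 2 with hS
  have hS0 : ∀ s, 0 ≤ S s := fun s => by positivity
  have hlow : ∀ s, m * S s ≤ V s := by
    intro s
    obtain ⟨e1, e2, e3⟩ := hnorm s
    have hmα : m ≤ lα := min_le_left _ _
    have hmβ : m ≤ lβ := le_trans (min_le_right _ _) (min_le_left _ _)
    have hm1 : m ≤ 1 := le_trans (min_le_right _ _) (min_le_right _ _)
    have p1 : (0:ℝ) ≤ ‖Eα s‖ ^ 2 := by positivity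
    have p2 : (0:ℝ) ≤ ‖Eβ s‖ ^ 2 := by positivity
    have p3 : (0:ℝ) ≤ ‖Eb s‖ ^ 2 := by positivity
    simp only [hV, hS, e1, e2, e3]
    nlinarith
  have hup : V t₀ ≤ M * S t₀ := by
    obtain ⟨e1, e2, e3⟩ := hnorm t₀
    have hMα : lα ≤ M := le_max_left _ _
    have hMβ : lβ ≤ M := le_trans (le_max_left _ _) (le_max_right _ _)
    have hM1 : (1:ℝ) ≤ M := le_trans (le_max_right _ _) (le_max_right _ _)
    have p1 : (0:ℝ) ≤ ‖Eα t₀‖ ^ 2 := by positivity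
    have p2 : (0:ℝ) ≤ ‖Eβ t₀‖ ^ 2 := by positivity
    have p3 : (0:ℝ) ≤ ‖Eb t₀‖ ^ 2 := by positivity
    simp only [hV, hS, e1, e2, e3]
    nlinarith
  -- initial bound
  have hδ : Real.sqrt (S t₀) ≤ ε * Real.sqrt (m / M) := h0
  have hS₀ : S t₀ ≤ ε ^ 2 * (m / M) := by
    have := Real.sq_sqrt (hS0 t₀)
    have hsq : Real.sqrt (S t₀) ^ 2 ≤ (ε * Real.sqrt (m / M)) ^ 2 := by
      apply sq_le_sq' _ hδ
      nlinarith [Real.sqrt_nonneg (S t₀), Real.sqrt_nonneg (m / M), hε.le]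
    rw [this] at hsq
    calc S t₀ ≤ (ε * Real.sqrt (m / M)) ^ 2 := hsq
      _ = ε ^ 2 * Real.sqrt (m / M) ^ 2 := by ring
      _ = ε ^ 2 * (m / M) := by rw [Real.sq_sqrt (by positivity)]
  -- conclude
  have hSt : S t ≤ ε ^ 2 := by
    have h1 : m * S t ≤ V t := hlow t
    have h2 : V t₀ ≤ M * S t₀ := hup
    have h3 : M * S t₀ ≤ M * (ε ^ 2 * (m / M)) := by
      exact mul_le_mul_of_nonneg_left hS₀ hM0.le
    have h4 : M * (ε ^ 2 * (m / M)) = m * ε ^ 2 := by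
      field_simp
    have h5 : m * S t ≤ m * ε ^ 2 := by
      calc m * S t ≤ V t := h1
        _ ≤ V t₀ := hVle
        _ ≤ M * S t₀ := h2
        _ ≤ M * (ε ^ 2 * (m / M)) := h3
        _ = m * ε ^ 2 := h4
    exact le_of_mul_le_mul_left h5 hm0
  calc stateNorm (Eα t) (Eβ t) (Eb t) = Real.sqrt (S t) := rfl
    _ ≤ Real.sqrt (ε ^ 2) := Real.sqrt_le_sqrt hSt
    _ = ε := by rw [Real.sqrt_sq hε.le]
end
end

section
/- Let a, b ∈ ℝ³ be linearly independent and let λ, μ > 0. Then the symmetric 3×3 matrix −(λ a_×² + μ b_×²) is positive definite; in particular there exists ν > 0 such that ⟨x, (λ a_×² + μ b_×²) x⟩ ≤ −ν ‖x‖² for all x ∈ ℝ³. -/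
open scoped RealInnerProductSpace
open Matrix Filter

noncomputable section

/-- The skew-symmetric matrix `v_×` with `v_× x = v × x`. -/
def skew (v : V3) : Matrix (Fin 3) (Fin 3) ℝ :=
  !![0, -(toF v 2), toF v 1; toF v 2, 0, -(toF v 0); -(toF v 1), toF v 0, 0]

/-- Matrix-vector multiplication on `V3`. -/
def mulVecE (M : Matrix (Fin 3) (Fin 3) ℝ) (x : V3) : V3 := toE (M.mulVec (toF x))

lemma inner_mulVecE_eq (lam mu : ℝ) (a b x : V3) :
    ⟪x, mulVecE (lam • skew a ^ 2 + mu • skew b ^ 2) x⟫ =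
      -(lam * ⟪cross a x, cross a x⟫ + mu * ⟪cross b x, cross b x⟫) := by
  simp only [mulVecE, toE, toF, cross, PiLp.inner_apply, RCLike.inner_apply, conj_trivial,
    Fin.sum_univ_three, Matrix.add_mulVec, Matrix.smul_mulVec, pow_two,
    ← Matrix.mulVec_mulVec, Pi.add_apply, Pi.smul_apply, smul_eq_mul,
    Matrix.mulVec, dotProduct, skew, crossProduct]
  simp [Fin.sum_univ_three]
  ring

/-- If `v ×₃ x = 0` and `x ≠ 0`, then `v` is a multiple of `x`. -/
lemma eq_smul_of_cross_eq_zero {v x : V3} (hx : x ≠ 0)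
    (h : crossProduct (toF v) (toF x) = 0) : ∃ c : ℝ, toF v = c • toF x := by
  have hni : ¬ LinearIndependent ℝ ![toF v, toF x] := fun hli =>
    (crossProduct_ne_zero_iff_linearIndependent.2 hli) h
  rw [linearIndependent_fin2] at hni
  push_neg at hni
  have hx' : (![toF v, toF x] : Fin 2 → Fin 3 → ℝ) 1 ≠ 0 := by
    simpa [toF] using fun h0 => hx h0
  obtain ⟨c, hc⟩ := hni hx'
  exact ⟨c, by simpa using hc.symm⟩

lemma cross_eq_zero_forces (a b x : V3) (hind : LinearIndependent ℝ ![a, b])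
    (ha : cross a x = 0) (hb : cross b x = 0) : x = 0 := by
  by_contra hx
  obtain ⟨c, hc⟩ := eq_smul_of_cross_eq_zero (v := a) hx (by simpa [cross, toE] using ha)
  obtain ⟨d, hd⟩ := eq_smul_of_cross_eq_zero (v := b) hx (by simpa [cross, toE] using hb)
  -- a = c • x, b = d • x, contradicting linear independence of a, b
  have hab : LinearIndependent ℝ ![toF a, toF b] := by
    have : (![toF a, toF b] : Fin 2 → Fin 3 → ℝ) =
        (WithLp.linearEquiv 2 ℝ (Fin 3 → ℝ)).toLinearMap ∘ ![a, b] := by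
      funext i; fin_cases i <;> rfl
    rw [this]; exact hind.map' _ (LinearEquiv.ker _)
  rw [linearIndependent_fin2] at hab
  obtain ⟨hb0, h2⟩ := hab
  rcases eq_or_ne d 0 with rfl | hd0
  · exact hb0 (by simpa using hd)
  · refine h2 (c / d) ?_
    show (c / d) • toF b = toF a
    rw [hc, hd, smul_smul, div_mul_cancel₀ _ hd0]

/-- For linearly independent `a, b` and `λ, μ > 0`, the symmetric matrix
`−(λ a_×² + μ b_×²)` is positive definite; in particular
`⟨x, (λ a_×² + μ b_×²) x⟩ ≤ −ν ‖x‖²` for some `ν > 0` and all `x`. -/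
theorem neg_skew_sq_combination_posDef
    (a b : V3) (hind : LinearIndependent ℝ ![a, b])
    (lam mu : ℝ) (hlam : 0 < lam) (hmu : 0 < mu) :
    (-(lam • skew a ^ 2 + mu • skew b ^ 2)).PosDef ∧
    ∃ ν > (0 : ℝ), ∀ x : V3,
      ⟪x, mulVecE (lam • skew a ^ 2 + mu • skew b ^ 2) x⟫ ≤ -ν * ‖x‖ ^ 2 := by
  set M : Matrix (Fin 3) (Fin 3) ℝ := lam • skew a ^ 2 + mu • skew b ^ 2 with hM
  -- the quadratic form is negative on nonzero vectors
  have hneg : ∀ x : V3, x ≠ 0 → ⟪x, mulVecE M x⟫ < 0 := by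
    intro x hx
    rw [inner_mulVecE_eq, neg_lt_zero]
    have hca : (0:ℝ) ≤ ⟪cross a x, cross a x⟫ := real_inner_self_nonneg
    have hcb : (0:ℝ) ≤ ⟪cross b x, cross b x⟫ := real_inner_self_nonneg
    rcases eq_or_ne (cross a x) 0 with h0 | h0
    · have hb0 : cross b x ≠ 0 := fun hb0 => hx (cross_eq_zero_forces a b x hind h0 hb0)
      have : (0:ℝ) < ⟪cross b x, cross b x⟫ := by
        rw [real_inner_self_eq_norm_sq]; exact pow_pos (norm_pos_iff.2 hb0) 2
      nlinarith
    · have : (0:ℝ) < ⟪cross a x, cross a x⟫ := by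
        rw [real_inner_self_eq_norm_sq]; exact pow_pos (norm_pos_iff.2 h0) 2
      nlinarith
  -- positive definiteness
  have hPD : (-M).PosDef := by
    rw [Matrix.posDef_iff_dotProduct_mulVec]
    constructor
    · have hsT : ∀ v : V3, (skew v)ᵀ = -skew v := by
        intro v
        ext i j
        fin_cases i <;> fin_cases j <;> simp [skew]
      show (-M)ᴴ = -M
      rw [Matrix.conjTranspose_eq_transpose_of_trivial, Matrix.transpose_neg, hM,
        Matrix.transpose_add, Matrix.transpose_smul, Matrix.transpose_smul,
        Matrix.transpose_pow, Matrix.transpose_pow, hsT, hsT, neg_pow, neg_pow]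
      norm_num
    · intro x hx
      have hx' : toE x ≠ 0 := by simpa [toE] using hx
      have := hneg (toE x) hx'
      have hdot : dotProduct (star x) ((-M) *ᵥ x) = -⟪toE x, mulVecE M (toE x)⟫ := by
        simp only [mulVecE, toE, toF, PiLp.inner_apply, RCLike.inner_apply, conj_trivial,
          Matrix.neg_mulVec, dotProduct, star_trivial, Pi.neg_apply]
        simp [Fin.sum_univ_three]
        try ring
      rw [hdot]
      linarith
  refine ⟨hPD, ?_⟩
  -- extract a uniform bound via compactness of the unit sphere
  have hcont : Continuous fun x : V3 => ⟪x, mulVecE M x⟫ := by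
    have hlin : Continuous fun x : V3 => mulVecE M x := by
      have : IsLinearMap ℝ (fun x : V3 => mulVecE M x) := by
        constructor
        · intro u v
          show toE (M *ᵥ (toF u + toF v)) = toE (M *ᵥ toF u) + toE (M *ᵥ toF v)
          rw [Matrix.mulVec_add]; exact WithLp.toLp_add _ _ _
        · intro c v
          show toE (M *ᵥ (c • toF v)) = c • toE (M *ᵥ toF v)
          rw [Matrix.mulVec_smul]; exact WithLp.toLp_smul _ _ _
      exact (IsLinearMap.mk' _ this).continuous_of_finiteDimensional
    exact continuous_id.inner hlin
  have hSph : IsCompact (Metric.sphere (0 : V3) 1) := isCompact_sphere 0 1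
  have hSphNe : (Metric.sphere (0 : V3) 1).Nonempty :=
    NormedSpace.sphere_nonempty.2 zero_le_one
  obtain ⟨u, huS, hmin⟩ := hSph.exists_isMaxOn hSphNe hcont.continuousOn
  set ν : ℝ := -⟪u, mulVecE M u⟫ with hν
  have hu1 : ‖u‖ = 1 := by simpa using huS
  have hu0 : u ≠ 0 := by intro h; rw [h, norm_zero] at hu1; norm_num at hu1
  have hν0 : 0 < ν := by
    have := hneg u hu0; rw [hν]; linarith
  refine ⟨ν, hν0, fun x => ?_⟩
  rcases eq_or_ne x 0 with rfl | hx0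
  · have h0 : toF (0 : V3) = 0 := rfl
    have : mulVecE M 0 = 0 := by
      show toE (M *ᵥ toF (0 : V3)) = 0
      rw [h0, Matrix.mulVec_zero]; exact WithLp.toLp_zero _
    rw [this, inner_zero_right, norm_zero]
    norm_num
  · set y : V3 := ‖x‖⁻¹ • x with hy
    have hnx : (0:ℝ) < ‖x‖ := norm_pos_iff.2 hx0
    have hyS : y ∈ Metric.sphere (0 : V3) 1 := by
      simp [hy, norm_smul, abs_of_pos (inv_pos.2 hnx), inv_mul_cancel₀ hnx.ne']
    have hmin' : ⟪y, mulVecE M y⟫ ≤ -ν := by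
      have := hmin hyS; rw [hν, neg_neg]; exact this
    have hscale : ⟪x, mulVecE M x⟫ = ‖x‖ ^ 2 * ⟪y, mulVecE M y⟫ := by
      have hsm : mulVecE M y = ‖x‖⁻¹ • mulVecE M x := by
        show toE (M *ᵥ (‖x‖⁻¹ • toF x)) = ‖x‖⁻¹ • toE (M *ᵥ toF x)
        rw [Matrix.mulVec_smul]; exact WithLp.toLp_smul _ _ _
      rw [hy, hsm, real_inner_smul_left, real_inner_smul_right]
      field_simp
    rw [hscale]
    nlinarith [sq_nonneg ‖x‖, mul_le_mul_of_nonneg_left hmin' (sq_nonneg ‖x‖)]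
end
end

section
/- Let α_i, β_i ∈ ℝ³ be linearly independent, k_α, k_β, l_α, l_β > 0, and let μ > 0 satisfy ⟨x, ((l_α/k_α)(α_i)_×² + (l_β/k_β)(β_i)_×²) x⟩ ≤ −μ‖x‖² for all x ∈ ℝ³. Then for every ε > 0 and all E_α, E_β, E_b, Ω ∈ ℝ³, with D as defined from the error system: ⟨E_b, D⟩ ≤ (ε/2 − μ)‖E_b‖² + (l_α² ‖α_i‖² / (ε k_α²)) ‖E_α‖² ‖E_b‖² + (l_β² ‖β_i‖² / (ε k_β²)) ‖E_β‖² ‖E_b‖². -/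
open scoped RealInnerProductSpace
open Matrix Filter

noncomputable section

/-- The quadratic part of the Lyapunov function,
`V₁ = (1/2)(lα‖Eα‖² + lβ‖Eβ‖² + ‖Eb‖²)`. -/
def V1 (lα lβ : ℝ) (Eα Eβ Eb : V3) : ℝ :=
  (1 / 2) * (lα * ‖Eα‖ ^ 2 + lβ * ‖Eβ‖ ^ 2 + ‖Eb‖ ^ 2)

/-- `u_{αβ} = (lα/kα) αi × Eα + (lβ/kβ) βi × Eβ`. -/
def uab (αi βi : V3) (kα kβ lα lβ : ℝ) (Eα Eβ : V3) : V3 :=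
  (lα / kα) • cross αi Eα + (lβ / kβ) • cross βi Eβ

/-- `D`, the time derivative of `Eb − u_{αβ}` along the error system. -/
def Dvec (αi βi : V3) (kα kβ lα lβ : ℝ) (Eα Eβ Eb Ω : V3) : V3 :=
  (cross Ω Eb + lα • cross Eα αi + lβ • cross Eβ βi)
    - (lα / kα) • cross αi (cross Eb (αi + Eα) - kα • Eα)
    - (lβ / kβ) • cross βi (cross Eb (βi + Eβ) - kβ • Eβ)


set_option maxHeartbeats 1600000 in
lemma key_identity (αi βi : V3) (kα kβ lα lβ : ℝ) (hkα : kα ≠ 0) (hkβ : kβ ≠ 0)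
    (Eα Eβ Eb Ω : V3) :
  ⟪Eb, Dvec αi βi kα kβ lα lβ Eα Eβ Eb Ω⟫ =
    ⟪Eb, mulVecE ((lα / kα) • skew αi ^ 2 + (lβ / kβ) • skew βi ^ 2) Eb⟫
    - (lα/kα) * ⟪Eb, cross αi (cross Eb Eα)⟫
    - (lβ/kβ) * ⟪Eb, cross βi (cross Eb Eβ)⟫ := by
  simp [Dvec, cross, toE, toF, crossProduct, mulVecE, skew, PiLp.inner_apply,
    Fin.sum_univ_three, Matrix.mulVec, dotProduct, pow_two, Matrix.mul_apply,
    Matrix.vecHead, Matrix.vecTail]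
  field_simp
  ring

lemma cross_norm_le (v w : V3) : ‖cross v w‖ ≤ ‖v‖ * ‖w‖ := by
  have h : ∀ x : V3, ‖x‖^2 = x 0^2 + x 1^2 + x 2^2 := by
    intro x
    rw [EuclideanSpace.norm_eq, Real.sq_sqrt (by positivity)]
    simp [Fin.sum_univ_three]
  have hsq : ‖cross v w‖ ^ 2 ≤ (‖v‖ * ‖w‖) ^ 2 := by
    have h0 : (cross v w) 0 = v 1 * w 2 - v 2 * w 1 := by simp [cross, toE, toF, crossProduct]
    have h1 : (cross v w) 1 = v 2 * w 0 - v 0 * w 2 := by simp [cross, toE, toF, crossProduct]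
    have h2 : (cross v w) 2 = v 0 * w 1 - v 1 * w 0 := by simp [cross, toE, toF, crossProduct]
    rw [mul_pow, h v, h w, h (cross v w), h0, h1, h2]
    nlinarith [sq_nonneg (v 0 * w 0 + v 1 * w 1 + v 2 * w 2)]
  exact (pow_le_pow_iff_left₀ (norm_nonneg _) (mul_nonneg (norm_nonneg v) (norm_nonneg w))
    two_ne_zero).mp hsq

lemma inner_cross_bound (a Eb E : V3) (c : ℝ) (hc : 0 ≤ c) :
    -(c * ⟪Eb, cross a (cross Eb E)⟫) ≤ c * (‖a‖ * ‖E‖ * ‖Eb‖ ^ 2) := by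
  have h1 := abs_real_inner_le_norm Eb (cross a (cross Eb E))
  have h2 := cross_norm_le a (cross Eb E)
  have h3 := cross_norm_le Eb E
  have h4 : -⟪Eb, cross a (cross Eb E)⟫ ≤ ‖a‖ * ‖E‖ * ‖Eb‖ ^ 2 := by
    nlinarith [neg_abs_le (⟪Eb, cross a (cross Eb E)⟫), norm_nonneg Eb, norm_nonneg a,
      norm_nonneg E, norm_nonneg (cross Eb E), norm_nonneg (cross a (cross Eb E)),
      mul_le_mul_of_nonneg_left h2 (norm_nonneg Eb),
      mul_le_mul_of_nonneg_left h3 (mul_nonneg (norm_nonneg Eb) (norm_nonneg a))]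
  nlinarith [mul_le_mul_of_nonneg_left h4 hc]

lemma young_piece (c ε b : ℝ) (hc : 0 ≤ c) (hε : 0 < ε) :
    c * b ^ 2 ≤ (ε / 4) * b ^ 2 + (c ^ 2 / ε) * b ^ 2 := by
  have h : c ≤ ε / 4 + c ^ 2 / ε := by
    rw [← sub_nonneg]
    have he : ε / 4 + c ^ 2 / ε - c = (c - ε / 2) ^ 2 / ε := by field_simp; ring
    rw [he]; positivity
  nlinarith [sq_nonneg b]

/-- Bound on `⟨E_b, D⟩` obtained from Young's inequality. -/
theorem inner_Eb_D_bound
    (αi βi : V3) (hind : LinearIndependent ℝ ![αi, βi])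
    (kα kβ lα lβ : ℝ) (hkα : 0 < kα) (hkβ : 0 < kβ) (hlα : 0 < lα) (hlβ : 0 < lβ)
    (μ : ℝ) (hμ : 0 < μ)
    (hμbound : ∀ x : V3,
      ⟪x, mulVecE ((lα / kα) • skew αi ^ 2 + (lβ / kβ) • skew βi ^ 2) x⟫ ≤ -μ * ‖x‖ ^ 2) :
    ∀ ε > (0 : ℝ), ∀ Eα Eβ Eb Ω : V3,
      ⟪Eb, Dvec αi βi kα kβ lα lβ Eα Eβ Eb Ω⟫
        ≤ (ε / 2 - μ) * ‖Eb‖ ^ 2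
          + (lα ^ 2 * ‖αi‖ ^ 2 / (ε * kα ^ 2)) * ‖Eα‖ ^ 2 * ‖Eb‖ ^ 2
          + (lβ ^ 2 * ‖βi‖ ^ 2 / (ε * kβ ^ 2)) * ‖Eβ‖ ^ 2 * ‖Eb‖ ^ 2 := by
  intro ε hε Eα Eβ Eb Ω
  rw [key_identity αi βi kα kβ lα lβ hkα.ne' hkβ.ne' Eα Eβ Eb Ω]
  have hM := hμbound Eb
  have hcα : (0:ℝ) ≤ lα / kα := by positivity
  have hcβ : (0:ℝ) ≤ lβ / kβ := by positivity
  have hAα := inner_cross_bound αi Eb Eα (lα / kα) hcα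
  have hAβ := inner_cross_bound βi Eb Eβ (lβ / kβ) hcβ
  have hYα := young_piece ((lα / kα) * (‖αi‖ * ‖Eα‖)) ε ‖Eb‖
    (by positivity) hε
  have hYβ := young_piece ((lβ / kβ) * (‖βi‖ * ‖Eβ‖)) ε ‖Eb‖
    (by positivity) hε
  have hrα : ((lα / kα) * (‖αi‖ * ‖Eα‖)) ^ 2 / ε
      = (lα ^ 2 * ‖αi‖ ^ 2 / (ε * kα ^ 2)) * ‖Eα‖ ^ 2 := by
    field_simp
  have hrβ : ((lβ / kβ) * (‖βi‖ * ‖Eβ‖)) ^ 2 / ε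
      = (lβ ^ 2 * ‖βi‖ ^ 2 / (ε * kβ ^ 2)) * ‖Eβ‖ ^ 2 := by
    field_simp
  rw [hrα] at hYα
  rw [hrβ] at hYβ
  nlinarith [hM, hAα, hAβ, hYα, hYβ]
end
end

section
/- Let R be a real 3×3 special orthogonal matrix and α_i, β_i ∈ ℝ³ linearly independent. Set α := Rᵀ α_i and β := Rᵀ β_i. Then the 3×3 matrix with columns (α/‖α_i‖, (α × β)/‖α_i × β_i‖, (α × (α × β))/‖α_i × (α_i × β_i)‖), multiplied on the right by R_iᵀ, equals Rᵀ, where R_i is the matrix with columns (α_i/‖α_i‖, (α_i × β_i)/‖α_i × β_i‖, (α_i × (α_i × β_i))/‖α_i × (α_i × β_i)‖). -/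
open scoped RealInnerProductSpace
open Matrix Filter

set_option maxHeartbeats 1000000

noncomputable section

/-- The 3×3 matrix whose columns are `v1, v2, v3`. -/
def colMat (v1 v2 v3 : V3) : Matrix (Fin 3) (Fin 3) ℝ :=
  Matrix.of fun i j => toF (![v1, v2, v3] j) i

/-- The matrix `R_i` with columns
`αi/‖αi‖, (αi × βi)/‖αi × βi‖, (αi × (αi × βi))/‖αi × (αi × βi)‖`. -/
def Rimat (αi βi : V3) : Matrix (Fin 3) (Fin 3) ℝ :=
  colMat ((1 / ‖αi‖) • αi) ((1 / ‖cross αi βi‖) • cross αi βi)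
    ((1 / ‖cross αi (cross αi βi)‖) • cross αi (cross αi βi))

lemma cross_mulVec_adj (M : Matrix (Fin 3) (Fin 3) ℝ) (u v : Fin 3 → ℝ) :
    crossProduct (M.mulVec u) (M.mulVec v) = (M.adjugate)ᵀ.mulVec (crossProduct u v) := by
  funext i
  fin_cases i <;>
    simp [cross_apply, mulVec, dotProduct, adjugate_fin_three, Fin.sum_univ_three] <;> ring

lemma dot_eq_norm_sq (x : V3) : toF x ⬝ᵥ toF x = ‖x‖ ^ 2 := by
  rw [EuclideanSpace.norm_eq, Real.sq_sqrt (by positivity)]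
  simp [dotProduct, toF, sq]

lemma norm_cross1 (αi βi : V3) : toF (cross αi βi) = crossProduct (toF αi) (toF βi) := rfl

lemma colMat_orth (u1 u2 u3 : V3) (n1 n2 n3 : ℝ) (h1 : n1 ≠ 0) (h2 : n2 ≠ 0)
    (h3 : n3 ≠ 0) (d11 : toF u1 ⬝ᵥ toF u1 = n1 ^ 2) (d22 : toF u2 ⬝ᵥ toF u2 = n2 ^ 2)
    (d33 : toF u3 ⬝ᵥ toF u3 = n3 ^ 2) (d12 : toF u1 ⬝ᵥ toF u2 = 0)
    (d13 : toF u1 ⬝ᵥ toF u3 = 0) (d23 : toF u2 ⬝ᵥ toF u3 = 0) :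
    (colMat ((1 / n1) • u1) ((1 / n2) • u2) ((1 / n3) • u3))ᵀ
      * colMat ((1 / n1) • u1) ((1 / n2) • u2) ((1 / n3) • u3) = 1 := by
  simp only [dotProduct, Fin.sum_univ_three, toF] at d11 d22 d33 d12 d13 d23
  ext i j
  fin_cases i <;> fin_cases j <;>
    simp [colMat, Matrix.mul_apply, Fin.sum_univ_three, toF, Matrix.one_apply,
      PiLp.smul_apply, smul_eq_mul]
  · field_simp
    linear_combination d11
  · linear_combination (1 / (n1 * n2)) * d12
  · linear_combination (1 / (n1 * n3)) * d13
  · linear_combination (1 / (n1 * n2)) * d12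
  · field_simp
    linear_combination d22
  · linear_combination (1 / (n2 * n3)) * d23
  · linear_combination (1 / (n1 * n3)) * d13
  · linear_combination (1 / (n2 * n3)) * d23
  · field_simp
    linear_combination d33

/-- With `α = Rᵀ αi` and `β = Rᵀ βi`, the matrix with columns
`α/‖αi‖, (α × β)/‖αi × βi‖, (α × (α × β))/‖αi × (αi × βi)‖`, multiplied on the
right by `R_iᵀ`, equals `Rᵀ`. -/
theorem exact_attitude_reconstruction
    (R : Matrix (Fin 3) (Fin 3) ℝ) (hR : Rᵀ * R = 1 ∧ R.det = 1)
    (αi βi : V3) (hind : LinearIndependent ℝ ![αi, βi]) :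
    colMat ((1 / ‖αi‖) • mulVecE Rᵀ αi)
        ((1 / ‖cross αi βi‖) • cross (mulVecE Rᵀ αi) (mulVecE Rᵀ βi))
        ((1 / ‖cross αi (cross αi βi)‖)
          • cross (mulVecE Rᵀ αi) (cross (mulVecE Rᵀ αi) (mulVecE Rᵀ βi)))
      * (Rimat αi βi)ᵀ = Rᵀ := by
  obtain ⟨horth, hdet⟩ := hR
  set a : Fin 3 → ℝ := toF αi with ha
  set b : Fin 3 → ℝ := toF βi with hb
  -- adjugate of Rᵀ is R (transposed), giving cross-product equivariance
  have hRRt : R * Rᵀ = 1 := mul_eq_one_comm.mp horth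
  have hadj : (Rᵀ).adjugate = Rᵀᵀ := by
    have h1 : Rᵀ * (Rᵀ).adjugate = 1 := by
      rw [Matrix.mul_adjugate, Matrix.det_transpose, hdet, one_smul]
    calc (Rᵀ).adjugate = (Rᵀᵀ * Rᵀ) * (Rᵀ).adjugate := by
          rw [Matrix.transpose_transpose, hRRt, one_mul]
      _ = Rᵀᵀ * (Rᵀ * (Rᵀ).adjugate) := by rw [mul_assoc]
      _ = Rᵀᵀ := by rw [h1, mul_one]
  have hcross : ∀ u v : Fin 3 → ℝ,
      crossProduct (Rᵀ.mulVec u) (Rᵀ.mulVec v) = Rᵀ.mulVec (crossProduct u v) := by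
    intro u v
    rw [cross_mulVec_adj, hadj, Matrix.transpose_transpose]
  -- nonvanishing
  have hindF : LinearIndependent ℝ ![a, b] := by
    convert hind.map' (WithLp.linearEquiv 2 ℝ (Fin 3 → ℝ)).toLinearMap (LinearEquiv.ker _) using 1
    case e'_5 => rfl
    case e'_6 => rfl
    funext i; fin_cases i <;> rfl
  have ha0 : αi ≠ 0 := hind.ne_zero 0
  have hna : ‖αi‖ ≠ 0 := norm_ne_zero_iff.mpr ha0
  have hcne : cross αi βi ≠ 0 := by
    have : crossProduct a b ≠ 0 := crossProduct_ne_zero_iff_linearIndependent.mpr hindF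
    intro h; apply this
    exact (congrArg toF h).trans (WithLp.ofLp_zero _)
  have hnc : ‖cross αi βi‖ ≠ 0 := norm_ne_zero_iff.mpr hcne
  have hccne : cross αi (cross αi βi) ≠ 0 := by
    intro h
    have hfun : crossProduct a (crossProduct a b) = 0 := (congrArg toF h).trans (WithLp.ofLp_zero _)
    have hexp : (a ⬝ᵥ b) • a - (a ⬝ᵥ a) • b = 0 := by
      funext i
      have := congrFun hfun i
      fin_cases i <;>
        · simp [cross_apply, dotProduct, Fin.sum_univ_three] at this ⊢
          linarith [this]
    have hpair := LinearIndependent.pair_iff.mp hindF (a ⬝ᵥ b) (-(a ⬝ᵥ a)) ?_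
    · have haa : a ⬝ᵥ a = 0 := by
        have := hpair.2; linarith
      rw [ha, dot_eq_norm_sq] at haa
      exact hna (by nlinarith)
    · have : (a ⬝ᵥ b) • a + (-(a ⬝ᵥ a)) • b = 0 := by
        rw [neg_smul, ← sub_eq_add_neg]; exact hexp
      exact this
  have hncc : ‖cross αi (cross αi βi)‖ ≠ 0 := norm_ne_zero_iff.mpr hccne
  -- Rimat is orthogonal
  have hTtT : (Rimat αi βi)ᵀ * Rimat αi βi = 1 :=
    colMat_orth αi (cross αi βi) (cross αi (cross αi βi)) _ _ _ hna hnc hncc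
      (dot_eq_norm_sq αi) (dot_eq_norm_sq (cross αi βi))
      (dot_eq_norm_sq (cross αi (cross αi βi)))
      (dot_self_cross a b) (dot_self_cross a (crossProduct a b))
      (dot_cross_self a (crossProduct a b))
  have hTTt : Rimat αi βi * (Rimat αi βi)ᵀ = 1 := mul_eq_one_comm.mp hTtT
  -- the left matrix is Rᵀ * Rimat
  have hleft : colMat ((1 / ‖αi‖) • mulVecE Rᵀ αi)
        ((1 / ‖cross αi βi‖) • cross (mulVecE Rᵀ αi) (mulVecE Rᵀ βi))
        ((1 / ‖cross αi (cross αi βi)‖)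
          • cross (mulVecE Rᵀ αi) (cross (mulVecE Rᵀ αi) (mulVecE Rᵀ βi)))
      = Rᵀ * Rimat αi βi := by
    have h1 : cross (mulVecE Rᵀ αi) (mulVecE Rᵀ βi) = mulVecE Rᵀ (cross αi βi) := by
      show toE (crossProduct (Rᵀ.mulVec a) (Rᵀ.mulVec b)) = _
      rw [hcross]; rfl
    have h2 : cross (mulVecE Rᵀ αi) (cross (mulVecE Rᵀ αi) (mulVecE Rᵀ βi))
        = mulVecE Rᵀ (cross αi (cross αi βi)) := by
      rw [h1]
      show toE (crossProduct (Rᵀ.mulVec a) (Rᵀ.mulVec (crossProduct a b))) = _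
      rw [hcross]; rfl
    rw [h2, h1]
    ext i j
    fin_cases i <;> fin_cases j <;>
      simp [colMat, Rimat, mulVecE, toF, toE, Matrix.mul_apply, mulVec, dotProduct,
        Fin.sum_univ_three, cross, cross_apply, PiLp.smul_apply, smul_eq_mul] <;> ring
  rw [hleft, mul_assoc, hTTt, mul_one]
end
end
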